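/- Let G' be a graph on [k] and G = (V, E) a graph with a partition V = V_1 ∪ ... ∪ V_k such that every edge {v, v'} of G with v ∈ V_i and v' ∈ V_j satisfies i = j or {i,j} is an edge of G'. Then the resilience of G is at most r(G') · max_i |V_i|. -/

import Mathlib

open SimpleGraph

/-- One step of a disintegration: `D` consists of exactly one vertex from each
connected component of the subgraph of `G` induced on `R`. -/
def DisStep {V : Type*} (G : SimpleGraph V) (R D : Set V) : Prop :=
  ∃ hsub : D ⊆ R,
    (∀ (v w : V) (hv : v ∈ D) (hw : w ∈ D), v ≠ w →
      (G.induce R).connectedComponentMk ⟨v, hsub hv⟩ ≠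
        (G.induce R).connectedComponentMk ⟨w, hsub hw⟩) ∧
    (∀ c : (G.induce R).ConnectedComponent, ∃ (v : V) (hv : v ∈ D),
      (G.induce R).connectedComponentMk ⟨v, hsub hv⟩ = c)

/-- `(D 0, D 1, ..., D (r-1))` is a disintegration of `G`: the steps partition the
vertex set and each step removes exactly one vertex per connected component of what remains. -/
def IsDisintegration {V : Type*} (G : SimpleGraph V) (D : ℕ → Set V) (r : ℕ) : Prop :=
  (∀ i, r ≤ i → D i = ∅) ∧ (⋃ i, D i) = Set.univ ∧
    ∀ i, DisStep G (Set.univ \ ⋃ j < i, D j) (D i)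

/-- The graph resilience: minimal length of a disintegration. -/
noncomputable def resilience {V : Type*} (G : SimpleGraph V) : ℕ :=
  sInf {r | ∃ D, IsDisintegration G D r}


namespace Stmt13Aux

open scoped Classical

variable {V : Type*}

/-- Push a reachability in an induced subgraph forward along a vertex map that sends
edges to edges-or-equal. -/
lemma reachable_map {W : Type*} (G : SimpleGraph V) (H : SimpleGraph W) {R : Set V} {S : Set W}
    (g : V → W) (hg : ∀ v ∈ R, g v ∈ S)
    (hadj : ∀ a b : V, a ∈ R → b ∈ R → G.Adj a b → g a = g b ∨ H.Adj (g a) (g b))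
    {v w : ↥R} (hr : (G.induce R).Reachable v w) :
    (H.induce S).Reachable ⟨g v, hg v v.2⟩ ⟨g w, hg w w.2⟩ := by
  obtain ⟨p⟩ := hr
  induction p with
  | nil => exact Reachable.refl _
  | cons ha p ih =>
    rename_i a b c
    have hab : G.Adj ↑a ↑b := ha
    rcases hadj a b a.2 b.2 hab with he | hAdj
    · have : (⟨g ↑a, hg a a.2⟩ : ↥S) = ⟨g ↑b, hg b b.2⟩ := Subtype.ext he
      rw [this]; exact ih
    · have : (H.induce S).Adj ⟨g ↑a, hg a a.2⟩ ⟨g ↑b, hg b b.2⟩ := hAdj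
      exact (this.reachable).trans ih

/-- Reachability in an induced subgraph is monotone in the vertex set. -/
lemma reachable_mono (G : SimpleGraph V) {R S : Set V} (hRS : R ⊆ S)
    {v w : ↥R} (hr : (G.induce R).Reachable v w) :
    (G.induce S).Reachable ⟨v, hRS v.2⟩ ⟨w, hRS w.2⟩ := by
  have := reachable_map G G (id : V → V) (fun x hx => hRS hx)
    (fun a b _ _ hab => Or.inr hab) hr
  exact this

noncomputable def pickC (G : SimpleGraph V) (R : Set V) (P : V → Prop)
    (c : (G.induce R).ConnectedComponent) : ↥R :=
  if h : ∃ v : ↥R, (G.induce R).connectedComponentMk v = c ∧ P ↑v then h.choose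
  else c.exists_rep.choose

lemma pickC_mk (G : SimpleGraph V) (R : Set V) (P : V → Prop)
    (c : (G.induce R).ConnectedComponent) :
    (G.induce R).connectedComponentMk (pickC G R P c) = c := by
  unfold pickC
  split
  · next h => exact h.choose_spec.1
  · next h => exact c.exists_rep.choose_spec

lemma pickC_prop (G : SimpleGraph V) (R : Set V) (P : V → Prop)
    (c : (G.induce R).ConnectedComponent)
    (h : ∃ v : ↥R, (G.induce R).connectedComponentMk v = c ∧ P ↑v) :
    P ↑(pickC G R P c) := by
  unfold pickC
  rw [dif_pos h]
  exact h.choose_spec.2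

noncomputable def stepSet (G : SimpleGraph V) (R : Set V) (P : V → Prop) : Set V :=
  {v | ∃ h : v ∈ R, pickC G R P ((G.induce R).connectedComponentMk ⟨v, h⟩) = ⟨v, h⟩}

lemma stepSet_subset (G : SimpleGraph V) (R : Set V) (P : V → Prop) :
    stepSet G R P ⊆ R := fun _ hv => hv.choose

lemma mem_stepSet_pick (G : SimpleGraph V) (R : Set V) (P : V → Prop)
    (c : (G.induce R).ConnectedComponent) :
    ↑(pickC G R P c) ∈ stepSet G R P := by
  refine ⟨(pickC G R P c).2, ?_⟩
  show pickC G R P ((G.induce R).connectedComponentMk (pickC G R P c)) = pickC G R P c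
  rw [pickC_mk]

lemma disStep_stepSet (G : SimpleGraph V) (R : Set V) (P : V → Prop) :
    DisStep G R (stepSet G R P) := by
  refine ⟨stepSet_subset G R P, ?_, ?_⟩
  · intro v w hv hw hne heq
    obtain ⟨hv', hv2⟩ := hv
    obtain ⟨hw', hw2⟩ := hw
    apply hne
    have : (⟨v, hv'⟩ : ↥R) = ⟨w, hw'⟩ := by
      rw [← hv2, ← hw2]
      congr 1
    exact congrArg Subtype.val this
  · intro c
    refine ⟨↑(pickC G R P c), mem_stepSet_pick G R P c, ?_⟩
    show (G.induce R).connectedComponentMk (pickC G R P c) = c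
    exact pickC_mk G R P c

noncomputable def run (G : SimpleGraph V) (P : ℕ → V → Prop) : ℕ → Set V
  | 0 => Set.univ
  | s + 1 => run G P s \ stepSet G (run G P s) (P s)

noncomputable def runD (G : SimpleGraph V) (P : ℕ → V → Prop) (s : ℕ) : Set V :=
  stepSet G (run G P s) (P s)

lemma run_succ (G : SimpleGraph V) (P : ℕ → V → Prop) (s : ℕ) :
    run G P (s + 1) = run G P s \ runD G P s := rfl

lemma run_succ_subset (G : SimpleGraph V) (P : ℕ → V → Prop) (s : ℕ) :
    run G P (s + 1) ⊆ run G P s := Set.diff_subset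

lemma run_mono (G : SimpleGraph V) (P : ℕ → V → Prop) {s t : ℕ} (hst : s ≤ t) :
    run G P t ⊆ run G P s := by
  induction t with
  | zero => simp_all
  | succ n ih =>
    rcases Nat.lt_or_ge s (n+1) with hlt | hge
    · exact (run_succ_subset G P n).trans (ih (Nat.lt_succ_iff.mp hlt))
    · have : s = n + 1 := le_antisymm hst hge
      subst this; rfl

lemma run_eq (G : SimpleGraph V) (P : ℕ → V → Prop) (i : ℕ) :
    run G P i = Set.univ \ ⋃ j < i, runD G P j := by
  induction i with
  | zero => simp [run]
  | succ n ih =>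
    rw [run_succ, ih]
    ext v
    simp only [Set.mem_diff, Set.mem_univ, true_and, Set.mem_iUnion, not_exists]
    constructor
    · rintro ⟨hn, hd⟩ j hj
      rcases Nat.lt_succ_iff_lt_or_eq.mp hj with hj' | rfl
      · exact hn j hj'
      · exact hd
    · intro hall
      exact ⟨fun j hj => hall j (Nat.lt_succ_of_lt hj), hall n (Nat.lt_succ_self n)⟩

lemma run_empty_of_le (G : SimpleGraph V) (P : ℕ → V → Prop) {s t : ℕ}
    (hs : run G P s = ∅) (hst : s ≤ t) : run G P t = ∅ :=
  Set.subset_eq_empty (hs ▸ run_mono G P hst) rfl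

lemma stepSet_empty (G : SimpleGraph V) (P : V → Prop) :
    stepSet G (∅ : Set V) P = ∅ :=
  Set.subset_eq_empty (stepSet_subset G ∅ P) rfl

lemma isDisintegration_run (G : SimpleGraph V) (P : ℕ → V → Prop) (N : ℕ)
    (hN : run G P N = ∅) : IsDisintegration G (runD G P) N := by
  refine ⟨?_, ?_, ?_⟩
  · intro i hi
    have : run G P i = ∅ := run_empty_of_le G P hN hi
    rw [runD, this]
    exact stepSet_empty G (P i)
  · apply Set.eq_univ_of_univ_subset
    intro v _
    classical
    have hex : ∃ s, v ∉ run G P s := ⟨N, by rw [hN]; exact id⟩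
    have hmem : v ∉ run G P (Nat.find hex) := Nat.find_spec hex
    have h0 : Nat.find hex ≠ 0 := by
      intro h0
      apply hmem
      rw [h0]
      exact Set.mem_univ v
    obtain ⟨s, hs⟩ := Nat.exists_eq_succ_of_ne_zero h0
    rw [hs] at hmem
    have hvs : v ∈ run G P s := by
      by_contra hc
      exact absurd hc (by have := Nat.find_min hex (m := s) (by omega); simpa using this)
    have : v ∈ runD G P s := by
      by_contra hc
      exact hmem ⟨hvs, hc⟩
    exact Set.mem_iUnion.mpr ⟨s, this⟩
  · intro i
    rw [show (Set.univ \ ⋃ j < i, runD G P j) = run G P i from (run_eq G P i).symm]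
    exact disStep_stepSet G (run G P i) (P i)

lemma run_card_le [Fintype V] (G : SimpleGraph V) (P : ℕ → V → Prop) (s : ℕ) :
    run G P s = ∅ ∨ (run G P s).ncard + s ≤ Fintype.card V := by
  induction s with
  | zero =>
    right
    simp [run, Set.ncard_univ]
  | succ n ih =>
    rcases ih with h | h
    · exact Or.inl (run_empty_of_le G P h n.le_succ)
    rcases Set.eq_empty_or_nonempty (run G P (n+1)) with he | hne
    · exact Or.inl he
    right
    obtain ⟨v, hv⟩ := hne
    have hvn : v ∈ run G P n := run_succ_subset G P n hv
    set p := pickC G (run G P n) (P n) ((G.induce (run G P n)).connectedComponentMk ⟨v, hvn⟩)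
    have hp : ↑p ∈ runD G P n := mem_stepSet_pick G (run G P n) (P n) _
    have hsub : run G P (n+1) ⊆ run G P n \ {↑p} := by
      intro w hw
      refine ⟨run_succ_subset G P n hw, ?_⟩
      intro hwp
      simp only [Set.mem_singleton_iff] at hwp
      exact hw.2 (hwp ▸ hp)
    have h1 : (run G P (n+1)).ncard ≤ (run G P n \ {↑p}).ncard :=
      Set.ncard_le_ncard hsub (Set.toFinite _)
    have h2 : (run G P n \ {↑p}).ncard = (run G P n).ncard - 1 :=
      Set.ncard_diff_singleton_of_mem p.2
    have h3 : 1 ≤ (run G P n).ncard := by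
      rw [Nat.one_le_iff_ne_zero]
      intro h0
      have := (Set.ncard_eq_zero (Set.toFinite _)).mp h0
      rw [this] at hvn
      exact hvn
    omega

lemma exists_disintegration [Fintype V] (G : SimpleGraph V) :
    ∃ D, IsDisintegration G D (Fintype.card V) := by
  refine ⟨runD G (fun _ _ => True), isDisintegration_run G _ _ ?_⟩
  rcases run_card_le G (fun _ _ => True) (Fintype.card V) with h | h
  · exact h
  · rcases Set.eq_empty_or_nonempty (run G (fun _ _ => True) (Fintype.card V)) with he | hne
    · exact he
    · exfalso
      have : 1 ≤ (run G (fun _ _ => True) (Fintype.card V)).ncard :=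
        (Set.ncard_pos (Set.toFinite _)).mpr hne
      omega

lemma main_run_empty [Fintype V] {k : ℕ} (G' : SimpleGraph (Fin k)) (G : SimpleGraph V)
    (f : V → Fin k) (h : ∀ v w, G.Adj v w → f v = f w ∨ G'.Adj (f v) (f w))
    (D' : ℕ → Set (Fin k)) (r' : ℕ) (hD' : IsDisintegration G' D' r')
    (m : ℕ) (hm : 0 < m)
    (hfib : ∀ i : Fin k, (Finset.univ.filter fun v => f v = i).card ≤ m) :
    run G (fun s v => f v ∈ D' (s / m)) (r' * m) = ∅ := by
  classical
  set P : ℕ → V → Prop := fun s v => f v ∈ D' (s / m) with hP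
  set R' : ℕ → Set (Fin k) := fun t => Set.univ \ ⋃ u < t, D' u with hR'
  -- the targets bound within a phase
  have targets : ∀ t : ℕ, (∀ v ∈ run G P (t * m), f v ∈ R' t) →
      ∀ j, j ≤ m → ∀ (v : V) (hv : v ∈ run G P (t * m + j)),
      {w | ∃ hw : w ∈ run G P (t * m + j), f w ∈ D' t ∧
        (G.induce (run G P (t * m + j))).Reachable ⟨v, hv⟩ ⟨w, hw⟩}.ncard ≤ m - j := by
    intro t hIm j
    induction j with
    | zero =>
      intro _ v hv
      set T := {w | ∃ hw : w ∈ run G P (t * m + 0), f w ∈ D' t ∧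
        (G.induce (run G P (t * m + 0))).Reachable ⟨v, hv⟩ ⟨w, hw⟩} with hT
      rcases Set.eq_empty_or_nonempty T with he | ⟨w1, hw1⟩
      · rw [he]; simp
      obtain ⟨hw1r, hw1d, hw1reach⟩ := hw1
      have hsubfib : T ⊆ f ⁻¹' {f w1} := by
        rintro w2 ⟨hw2r, hw2d, hw2reach⟩
        obtain ⟨hsub', hinj', _⟩ := hD'.2.2 t
        by_contra hne
        have hreach : (G.induce (run G P (t * m + 0))).Reachable ⟨w2, hw2r⟩ ⟨w1, hw1r⟩ :=
          hw2reach.symm.trans hw1reach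
        have hpush := reachable_map G G' f
          (fun x hx => hIm x hx)
          (fun a b _ _ hab => h a b hab) hreach
        exact hinj' (f w2) (f w1) hw2d hw1d hne (ConnectedComponent.eq.mpr hpush)
      calc T.ncard ≤ (f ⁻¹' {f w1}).ncard := Set.ncard_le_ncard hsubfib (Set.toFinite _)
        _ = (Finset.univ.filter fun v => f v = f w1).card := by
            rw [show f ⁻¹' {f w1} = ↑(Finset.univ.filter fun v => f v = f w1) by ext; simp]
            exact Set.ncard_coe_finset _
        _ ≤ m := hfib (f w1)
        _ = m - 0 := by omega
    | succ j ih =>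
      intro hj1 v hv
      have hj : j ≤ m := by omega
      set s := t * m + j with hs
      show {w | ∃ hw : w ∈ run G P (s + 1), f w ∈ D' t ∧
        (G.induce (run G P (s + 1))).Reachable ⟨v, hv⟩ ⟨w, hw⟩}.ncard ≤ m - (j + 1)
      have hvs : v ∈ run G P s := run_succ_subset G P s hv
      set U := {w | ∃ hw : w ∈ run G P s, f w ∈ D' t ∧
        (G.induce (run G P s)).Reachable ⟨v, hvs⟩ ⟨w, hw⟩} with hU
      have hUcard : U.ncard ≤ m - j := ih hj v hvs
      have hdiv : s / m = t := by
        rw [hs, Nat.add_comm, Nat.add_mul_div_right _ _ hm, Nat.div_eq_of_lt (by omega)]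
        omega
      have hsubU : ∀ w, (∃ hw : w ∈ run G P (s + 1), f w ∈ D' t ∧
          (G.induce (run G P (s + 1))).Reachable ⟨v, hv⟩ ⟨w, hw⟩) → w ∈ U := by
        rintro w ⟨hw, hwd, hwreach⟩
        exact ⟨run_succ_subset G P s hw, hwd,
          reachable_mono G (run_succ_subset G P s) hwreach⟩
      rcases Set.eq_empty_or_nonempty U with he | ⟨w1, hw1⟩
      · have : {w | ∃ hw : w ∈ run G P (s + 1), f w ∈ D' t ∧
            (G.induce (run G P (s + 1))).Reachable ⟨v, hv⟩ ⟨w, hw⟩} = ∅ := by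
          rw [Set.eq_empty_iff_forall_notMem]
          intro w hw
          rw [Set.eq_empty_iff_forall_notMem] at he
          exact he w (hsubU w hw)
        rw [this]; simp
      obtain ⟨hw1r, hw1d, hw1reach⟩ := hw1
      set p := pickC G (run G P s) (P s) ((G.induce (run G P s)).connectedComponentMk ⟨v, hvs⟩)
        with hp
      have hpmem : ↑p ∈ runD G P s := mem_stepSet_pick G (run G P s) (P s) _
      have hpnot : ↑p ∉ run G P (s + 1) := fun hc => hc.2 hpmem
      have hpprop : P s ↑p := by
        apply pickC_prop
        refine ⟨⟨w1, hw1r⟩, ConnectedComponent.eq.mpr hw1reach.symm, ?_⟩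
        show f w1 ∈ D' (s / m)
        rw [hdiv]; exact hw1d
      have hpd : f ↑p ∈ D' t := by
        have h' : f ↑p ∈ D' (s / m) := hpprop
        rwa [hdiv] at h'
      have hpU : ↑p ∈ U := by
        refine ⟨p.2, hpd, ?_⟩
        have := pickC_mk G (run G P s) (P s) ((G.induce (run G P s)).connectedComponentMk ⟨v, hvs⟩)
        exact (ConnectedComponent.exact this).symm
      have hsub2 : {w | ∃ hw : w ∈ run G P (s + 1), f w ∈ D' t ∧
          (G.induce (run G P (s + 1))).Reachable ⟨v, hv⟩ ⟨w, hw⟩} ⊆ U \ {↑p} := by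
        rintro w hw
        refine ⟨hsubU w hw, ?_⟩
        intro hwp
        simp only [Set.mem_singleton_iff] at hwp
        obtain ⟨hwr, -, -⟩ := hw
        subst hwp
        exact hpnot hwr
      have h1 := Set.ncard_le_ncard hsub2 (Set.toFinite _)
      have h2 : (U \ {↑p}).ncard = U.ncard - 1 :=
        Set.ncard_diff_singleton_of_mem hpU
      have h3 : 1 ≤ U.ncard := (Set.ncard_pos (Set.toFinite _)).mpr ⟨↑p, hpU⟩
      omega
  -- the phase invariant
  have hInv : ∀ t : ℕ, ∀ v ∈ run G P (t * m), f v ∈ R' t := by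
    intro t
    induction t with
    | zero =>
      intro v _
      simp [hR', Set.mem_diff]
    | succ t ih =>
      intro v hv
      have hvv : v ∈ run G P (t * m + m) := by
        rwa [show (t + 1) * m = t * m + m from by ring] at hv
      have hnot : f v ∉ D' t := by
        intro hfd
        have := targets t ih m le_rfl v hvv
        have hmem : v ∈ {w | ∃ hw : w ∈ run G P (t * m + m), f w ∈ D' t ∧
            (G.induce (run G P (t * m + m))).Reachable ⟨v, hvv⟩ ⟨w, hw⟩} :=
          ⟨hvv, hfd, Reachable.refl _⟩
        have hpos : 1 ≤ ({w | ∃ hw : w ∈ run G P (t * m + m), f w ∈ D' t ∧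
            (G.induce (run G P (t * m + m))).Reachable ⟨v, hvv⟩ ⟨w, hw⟩}).ncard :=
          (Set.ncard_pos (Set.toFinite _)).mpr ⟨v, hmem⟩
        omega
      have hvt : v ∈ run G P (t * m) :=
        run_mono G P (by omega : t * m ≤ t * m + m) hvv
      have hRt : f v ∈ R' t := ih v hvt
      simp only [hR', Set.mem_diff, Set.mem_univ, true_and, Set.mem_iUnion, not_exists] at hRt ⊢
      intro u hu
      rcases Nat.lt_succ_iff_lt_or_eq.mp hu with hu' | rfl
      · exact hRt u hu'
      · exact hnot
  -- conclude
  have hRr : R' r' = ∅ := by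
    rw [Set.eq_empty_iff_forall_notMem]
    intro x hx
    have hxu : x ∈ ⋃ i, D' i := by rw [hD'.2.1]; exact Set.mem_univ x
    obtain ⟨i, hi⟩ := Set.mem_iUnion.mp hxu
    have hir : i < r' := by
      by_contra hge
      rw [hD'.1 i (by omega)] at hi
      exact hi
    simp only [hR', Set.mem_diff, Set.mem_univ, true_and, Set.mem_iUnion, not_exists] at hx
    exact hx i hir hi
  rw [Set.eq_empty_iff_forall_notMem]
  intro v hv
  have := hInv r' v hv
  rw [hRr] at this
  exact this

end Stmt13Aux

theorem stmt13 {V : Type*} [Fintype V] [DecidableEq V] (k : ℕ)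
    (G' : SimpleGraph (Fin k)) (G : SimpleGraph V) (f : V → Fin k)
    (h : ∀ v w, G.Adj v w → f v = f w ∨ G'.Adj (f v) (f w)) :
    resilience G ≤
      resilience G' * Finset.univ.sup (fun i => (Finset.univ.filter fun v => f v = i).card) := by
  classical
  set m := Finset.univ.sup (fun i : Fin k => (Finset.univ.filter fun v => f v = i).card) with hm
  rcases Nat.eq_zero_or_pos m with hm0 | hmpos
  · -- all fibers are empty, hence V is empty
    have hVempty : IsEmpty V := by
      constructor
      intro v
      have h1 : 0 < (Finset.univ.filter fun w => f w = f v).card :=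
        Finset.card_pos.mpr ⟨v, by simp⟩
      have h2 : (Finset.univ.filter fun w => f w = f v).card ≤ m := by
        rw [hm]
        exact Finset.le_sup (f := fun i : Fin k => (Finset.univ.filter fun v => f v = i).card)
          (Finset.mem_univ (f v))
      omega
    have hcard : Fintype.card V = 0 := Fintype.card_eq_zero_iff.mpr hVempty
    obtain ⟨D, hD⟩ := Stmt13Aux.exists_disintegration G
    rw [hcard] at hD
    have : resilience G ≤ 0 := Nat.sInf_le ⟨D, hD⟩
    omega
  · -- extract an optimal disintegration of G'
    have hne : {r | ∃ D, IsDisintegration G' D r}.Nonempty :=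
      ⟨Fintype.card (Fin k), Stmt13Aux.exists_disintegration G'⟩
    obtain ⟨D', hD'⟩ := Nat.sInf_mem hne
    have hfib : ∀ i : Fin k, (Finset.univ.filter fun v => f v = i).card ≤ m := by
      intro i
      rw [hm]
      exact Finset.le_sup (f := fun i : Fin k => (Finset.univ.filter fun v => f v = i).card)
        (Finset.mem_univ i)
    have hempty := Stmt13Aux.main_run_empty G' G f h D' (resilience G') hD' m hmpos hfib
    exact Nat.sInf_le ⟨_, Stmt13Aux.isDisintegration_run G _ _ hempty⟩
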